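/- (Theorem 1, identification of the counterfactual prediction.) Suppose there exists w* ∈ Δ such that Σ_{k=1}^K m_k(x) w*_k = m₀(x) for P₀-almost every x ∈ X, and that the K×K Gram matrix H with entries H_{jk} = ∫_S m_j m_k dP₀ is invertible. Let w₀ be the unique minimizer over Δ of ρ²(w) := ∫_S (Σ_{k=1}^K m_k w_k − m₀)² dP₀. Then θ₀ := ∫_X m₀ dP₀ satisfies θ₀ = ∫_S m₀ dP₀ + ∫_{X∖S} Σ_{k=1}^K m_k(x) w₀,k dP₀(x). -/

import Mathlib

open MeasureTheory Matrix

/-- The simplex `Δ = {w ∈ ℝ^K : w_j ≥ 0 for all j, Σ_j w_j = 1}`. -/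
def simplex (K : ℕ) : Set (Fin K → ℝ) :=
  {w | (∀ j, 0 ≤ w j) ∧ ∑ j, w j = 1}

lemma mul_int' {X : Type*} [MeasurableSpace X] {μ : Measure X} {f g : X → ℝ}
    (hf : MemLp f 2 μ) (hg : MemLp g 2 μ) : Integrable (fun x => f x * g x) μ := by
  have h := hf.smul (φ := g) hg (p := 2) (q := 2) (r := 1)
  rw [memLp_one_iff_integrable] at h
  have : (g • f) = fun x => g x * f x := rfl
  rw [this] at h
  simpa [mul_comm] using h

/-- Theorem 1 (identification of the counterfactual prediction): under synthetic
transferability (with some `w* ∈ Δ`) and invertibility of the Gram matrix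
`H_{jk} = ∫_S m_j m_k dP₀`, if `w₀` is the unique minimizer over `Δ` of
`ρ²(w) = ∫_S (Σ_k m_k w_k − m₀)² dP₀`, then
`θ₀ = ∫_X m₀ dP₀ = ∫_S m₀ dP₀ + ∫_{X∖S} Σ_k m_k w₀,k dP₀`. -/
theorem stmt1 {K : ℕ} (hK : 0 < K) {X : Type*} [MeasurableSpace X]
    (P₀ : Measure X) [IsProbabilityMeasure P₀]
    (S : Set X) (hS : MeasurableSet S)
    (m₀ : X → ℝ) (m : Fin K → X → ℝ)
    (hm₀meas : Measurable m₀) (hmmeas : ∀ k, Measurable (m k))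
    (hm₀L2 : MemLp m₀ 2 P₀) (hmL2 : ∀ k, MemLp (m k) 2 P₀)
    (wstar : Fin K → ℝ) (hwstar : wstar ∈ simplex K)
    (htrans : ∀ᵐ x ∂P₀, ∑ k, m k x * wstar k = m₀ x)
    (hH : IsUnit (Matrix.of fun j k : Fin K => ∫ x in S, m j x * m k x ∂P₀).det)
    (w₀ : Fin K → ℝ) (hw₀ : w₀ ∈ simplex K)
    (hw₀min : ∀ w ∈ simplex K,
      (∫ x in S, (∑ k, m k x * w₀ k - m₀ x) ^ 2 ∂P₀)
        ≤ ∫ x in S, (∑ k, m k x * w k - m₀ x) ^ 2 ∂P₀) :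
    ∫ x, m₀ x ∂P₀
      = (∫ x in S, m₀ x ∂P₀) + ∫ x in Sᶜ, (∑ k, m k x * w₀ k) ∂P₀ := by
  -- ρ²(w*) = 0
  have htransS : ∀ᵐ x ∂(P₀.restrict S), ∑ k, m k x * wstar k = m₀ x :=
    ae_restrict_of_ae htrans
  have hstar0 : (∫ x in S, (∑ k, m k x * wstar k - m₀ x) ^ 2 ∂P₀) = 0 := by
    rw [← integral_zero (X) ℝ (μ := P₀.restrict S)]
    apply integral_congr_ae
    filter_upwards [htransS] with x hx
    rw [hx]; ring
  -- ρ²(w₀) = 0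
  have hle := hw₀min wstar hwstar
  rw [hstar0] at hle
  have hge : 0 ≤ ∫ x in S, (∑ k, m k x * w₀ k - m₀ x) ^ 2 ∂P₀ :=
    integral_nonneg fun x => sq_nonneg _
  have h0 : (∫ x in S, (∑ k, m k x * w₀ k - m₀ x) ^ 2 ∂P₀) = 0 := le_antisymm hle hge
  -- the function x ↦ ∑ m k x * w₀ k - m₀ x is in L² hence its square is integrable
  have hgL2 : MemLp (fun x => ∑ k, m k x * w₀ k - m₀ x) 2 P₀ := by
    apply MemLp.sub _ hm₀L2
    have h := memLp_finset_sum' (μ := P₀) (p := 2) Finset.univ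
      (f := fun k x => m k x * w₀ k)
      (fun k _ => by simpa [mul_comm] using (hmL2 k).const_mul (w₀ k))
    have he : (∑ k : Fin K, fun x => m k x * w₀ k) = fun x => ∑ k, m k x * w₀ k := by
      funext x; simp [Finset.sum_apply]
    rwa [he] at h
  have hsqint : Integrable (fun x => (∑ k, m k x * w₀ k - m₀ x) ^ 2) (P₀.restrict S) :=
    (hgL2.restrict S).integrable_sq
  have hae0 : ∀ᵐ x ∂(P₀.restrict S), ∑ k, m k x * w₀ k = m₀ x := by
    have := (integral_eq_zero_iff_of_nonneg (fun x => sq_nonneg _) hsqint).mp h0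
    filter_upwards [this] with x hx
    have : (∑ k, m k x * w₀ k - m₀ x) ^ 2 = 0 := hx
    have := pow_eq_zero_iff (n := 2) (by norm_num) |>.mp this
    linarith
  -- difference d := w₀ - wstar satisfies ∑ m k x * d k = 0 a.e. on S
  set d : Fin K → ℝ := fun k => w₀ k - wstar k with hd
  have hdae : ∀ᵐ x ∂(P₀.restrict S), ∑ k, m k x * d k = 0 := by
    filter_upwards [hae0, htransS] with x h1 h2
    simp only [hd, mul_sub, Finset.sum_sub_distrib, h1, h2, sub_self]
  -- H d = 0
  set H := (Matrix.of fun j k : Fin K => ∫ x in S, m j x * m k x ∂P₀) with hHdef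
  have hmul : H.mulVec d = 0 := by
    funext j
    have hint : ∀ k, Integrable (fun x => m j x * m k x * d k) (P₀.restrict S) :=
      fun k => (mul_int' ((hmL2 j).restrict S) ((hmL2 k).restrict S)).mul_const (d k)
    have : (H.mulVec d) j = ∫ x in S, ∑ k, m j x * m k x * d k ∂P₀ := by
      rw [integral_finset_sum _ (fun k _ => hint k)]
      simp only [Matrix.mulVec, dotProduct, hHdef, Matrix.of_apply]
      congr 1; funext k
      rw [← integral_mul_const]
    rw [this]
    have : ∫ x in S, ∑ k, m j x * m k x * d k ∂P₀ = ∫ x in S, (0:ℝ) ∂P₀ := by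
      apply integral_congr_ae
      filter_upwards [hdae] with x hx
      simp only [mul_assoc, ← Finset.mul_sum, hx, mul_zero]
    simp only [this, integral_zero, Pi.zero_apply]
  have hd0 : d = 0 := Matrix.eq_zero_of_mulVec_eq_zero hH.ne_zero hmul
  have hw₀star : w₀ = wstar := by
    funext k
    have := congrFun hd0 k
    simp only [hd, Pi.zero_apply] at this
    linarith
  -- integrability of m₀
  have hm₀int : Integrable m₀ P₀ := hm₀L2.integrable (by norm_num)
  -- split the integral
  rw [← integral_add_compl hS hm₀int]
  congr 1
  apply integral_congr_ae
  have := ae_restrict_of_ae (μ := P₀) (s := Sᶜ) htrans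
  filter_upwards [this] with x hx
  rw [hw₀star, hx]
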